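/- With P idempotent linear filtration-preserving on a complete filtered associative algebra A, every η ∈ 1 + A_1 admits a unique factorization η = η_− · η_+ with η_− ∈ exp(P(A_1)) and η_+ ∈ exp((id−P)(A_1)). -/

import Mathlib

set_option linter.unusedSectionVars false


open scoped BigOperators

noncomputable def expS (K : Type*) {A : Type*} [Field K] [CharZero K] [Ring A] [Algebra K A]
    [UniformSpace A] (a : A) : A :=
  ∑' n : ℕ, ((n.factorial : K)⁻¹) • a ^ n

noncomputable def logS (K : Type*) {A : Type*} [Field K] [CharZero K] [Ring A] [Algebra K A]
    [UniformSpace A] (a : A) : A :=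
  ∑' n : ℕ, (((-1 : K) ^ n) * ((n : K) + 1)⁻¹) • (a - 1) ^ (n + 1)

noncomputable def BCHs (K : Type*) {A : Type*} [Field K] [CharZero K] [Ring A] [Algebra K A]
    [UniformSpace A] (x y : A) : A :=
  logS K (expS K x * expS K y) - x - y

/-- A complete decreasing multiplicative filtration defining the topology of `A`. -/
def IsCompleteFiltration (K : Type*) {A : Type*} [Field K] [CharZero K] [Ring A] [Algebra K A]
    [UniformSpace A] (F : ℕ → Submodule K A) : Prop :=
  F 0 = ⊤ ∧ (∀ n, F (n + 1) ≤ F n) ∧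
    (∀ m n : ℕ, ∀ x ∈ F m, ∀ y ∈ F n, x * y ∈ F (m + n)) ∧
    (∀ n, IsOpen ((F n : Set A))) ∧
    (∀ U ∈ nhds (0 : A), ∃ n, ((F n : Set A)) ⊆ U)

variable {K : Type*} [Field K] [CharZero K] {A : Type*} [Ring A] [Algebra K A]
  [UniformSpace A] [CompleteSpace A] [T2Space A] [IsTopologicalRing A]
  [IsUniformAddGroup A]

section Aux

/-- The correction sequence used in the congruence lemma for `expS`. -/
def corrSeq {A : Type*} [Ring A] (x y : A) : ℕ → A
  | 0 => 0
  | (k + 1) => corrSeq x y k * x + x ^ k * y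

/-- The iteration producing the factorization. -/
noncomputable def factorSeq (P : A →ₗ[K] A) (η : A) : ℕ → A × A
  | 0 => (0, 0)
  | (m + 1) =>
    let q := factorSeq P η m
    let δ := η - expS K q.1 * expS K q.2
    (q.1 + P δ, q.2 + (δ - P δ))

variable (F : ℕ → Submodule K A)

lemma fmem0 (hF : IsCompleteFiltration K F) (x : A) : x ∈ F 0 := by
  rw [hF.1]; exact Submodule.mem_top

lemma fle (hF : IsCompleteFiltration K F) {m n : ℕ} (h : m ≤ n) : F n ≤ F m :=
  antitone_nat_of_succ_le hF.2.1 h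

lemma fmul (hF : IsCompleteFiltration K F) {m n p : ℕ} (h : p ≤ m + n) {x y : A}
    (hx : x ∈ F m) (hy : y ∈ F n) : x * y ∈ F p :=
  fle F hF h (hF.2.2.1 m n x hx y hy)

lemma fmull (hF : IsCompleteFiltration K F) {n : ℕ} (x : A) {y : A} (hy : y ∈ F n) :
    x * y ∈ F n :=
  fmul F hF (by omega) (fmem0 F hF x) hy

lemma fmulr (hF : IsCompleteFiltration K F) {n : ℕ} {x : A} (hx : x ∈ F n) (y : A) :
    x * y ∈ F n :=
  fmul F hF (by omega) hx (fmem0 F hF y)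

lemma fclosed (hF : IsCompleteFiltration K F) (n : ℕ) : IsClosed ((F n : Set A)) :=
  AddSubgroup.isClosed_of_isOpen (F n).toAddSubgroup (hF.2.2.2.1 n)

lemma finter (hF : IsCompleteFiltration K F) {x : A} (h : ∀ n, x ∈ F n) : x = 0 := by
  have h0 : (0 : A) ∈ closure ({x} : Set A) := by
    rw [mem_closure_iff_nhds]
    intro t ht
    obtain ⟨n, hn⟩ := hF.2.2.2.2 t ht
    exact ⟨x, hn (h n), rfl⟩
  rw [closure_singleton] at h0
  exact (Set.mem_singleton_iff.mp h0).symm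

lemma finter' (hF : IsCompleteFiltration K F) {x : A} (h : ∀ n, x ∈ F (n + 1)) : x = 0 := by
  refine finter F hF fun n => ?_
  cases n with
  | zero => exact fmem0 F hF x
  | succ m => exact h m

lemma fsummable (hF : IsCompleteFiltration K F) {f : ℕ → A} (hf : ∀ k, f k ∈ F k) :
    Summable f := by
  rw [summable_iff_vanishing]
  intro e he
  obtain ⟨n, hn⟩ := hF.2.2.2.2 e he
  refine ⟨Finset.range n, fun t ht => ?_⟩
  refine hn (Submodule.sum_mem _ fun k hk => ?_)
  have hkn : ¬ k < n := fun hlt =>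
    (Finset.disjoint_left.mp ht hk) (Finset.mem_range.mpr hlt)
  exact fle F hF (le_of_not_gt hkn) (hf k)

lemma ftsum_mem (hF : IsCompleteFiltration K F) {f : ℕ → A} {n : ℕ} (hs : Summable f)
    (hf : ∀ k, f k ∈ F n) : ∑' k, f k ∈ F n := by
  refine (fclosed F hF n).mem_of_tendsto hs.hasSum
    (Filter.Eventually.of_forall fun s => ?_)
  exact Submodule.sum_mem _ fun k _ => hf k

lemma fpow_mem (hF : IsCompleteFiltration K F) {x : A} (hx : x ∈ F 1) (k : ℕ) :
    x ^ k ∈ F k := by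
  induction k with
  | zero => simpa using fmem0 F hF (1 : A)
  | succ k ih => rw [pow_succ]; exact fmul F hF le_rfl ih hx

lemma expS_summable (hF : IsCompleteFiltration K F) {a : A} (ha : a ∈ F 1) :
    Summable (fun k : ℕ => ((k.factorial : K)⁻¹) • a ^ k) :=
  fsummable F hF fun k => Submodule.smul_mem _ _ (fpow_mem F hF ha k)

lemma expS_zero : expS K (0 : A) = 1 := by
  rw [expS, tsum_eq_single 0 (fun k hk => by simp [zero_pow hk])]
  simp

lemma expS_sub_one_mem (hF : IsCompleteFiltration K F) {a : A} (ha : a ∈ F 1) :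
    expS K a - 1 ∈ F 1 := by
  have hs := expS_summable F hF ha
  have h0 : expS K a = 1 + ∑' k : ℕ, (((k + 1).factorial : K)⁻¹) • a ^ (k + 1) := by
    rw [show expS K a = ∑' k : ℕ, ((k.factorial : K)⁻¹) • a ^ k from rfl,
      Summable.tsum_eq_zero_add hs]
    simp
  rw [h0]
  have hsum : Summable (fun k : ℕ => (((k + 1).factorial : K)⁻¹) • a ^ (k + 1)) :=
    (summable_nat_add_iff 1).2 hs
  have hmem : ∑' k : ℕ, (((k + 1).factorial : K)⁻¹) • a ^ (k + 1) ∈ F 1 :=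
    ftsum_mem F hF hsum fun k => fle F hF (by omega)
      (Submodule.smul_mem _ _ (fpow_mem F hF ha (k + 1)))
  simpa using hmem

lemma fact_smul_cancel (k : ℕ) (z : A) :
    (((k + 1).factorial : K)⁻¹) • ((k + 1) • z) = ((k.factorial : K)⁻¹) • z := by
  rw [← Nat.cast_smul_eq_nsmul K, smul_smul]
  congr 1
  have hk1 : ((k : K) + 1) ≠ 0 := by
    have h : ((k + 1 : ℕ) : K) ≠ 0 := Nat.cast_ne_zero.mpr (Nat.succ_ne_zero k)
    simpa using h
  have hkf : ((k.factorial : K)) ≠ 0 := Nat.cast_ne_zero.mpr k.factorial_ne_zero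
  rw [Nat.factorial_succ]
  push_cast
  field_simp

lemma key_cong (hF : IsCompleteFiltration K F) {x y : A} {n : ℕ} (hx : x ∈ F 1)
    (hn : 1 ≤ n) (hy : y ∈ F n) :
    expS K (x + y) - expS K x * (1 + y) ∈ F (n + 1) := by
  classical
  have hy1 : y ∈ F 1 := fle F hF hn hy
  have hxy : x + y ∈ F 1 := add_mem hx hy1
  have hcs : ∀ k, corrSeq x y (k + 1) = corrSeq x y k * x + x ^ k * y := fun k => rfl
  have hc0 : corrSeq x y 0 = 0 := rfl
  have hcF : ∀ k, corrSeq x y k ∈ F n := by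
    intro k
    induction k with
    | zero => rw [hc0]; exact zero_mem _
    | succ k ih =>
      rw [hcs]
      exact add_mem (fmulr F hF ih x) (fmull F hF _ hy)
  have hyx : y * x - x * y ∈ F (n + 1) :=
    sub_mem (fmul F hF le_rfl hy hx) (fmul F hF (by omega) hx hy)
  have claim1 : ∀ k, (x + y) ^ k - x ^ k - corrSeq x y k ∈ F (n + 1) := by
    intro k
    induction k with
    | zero => simp [hc0]
    | succ k ih =>
      have hid : (x + y) ^ (k + 1) - x ^ (k + 1) - corrSeq x y (k + 1)
          = ((x + y) ^ k - x ^ k - corrSeq x y k) * (x + y) + corrSeq x y k * y := by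
        rw [hcs, pow_succ, pow_succ]; noncomm_ring
      rw [hid]
      exact add_mem (fmulr F hF ih _) (fmul F hF (by omega) (hcF k) hy)
  have claim2 : ∀ k, corrSeq x y (k + 1) - (k + 1) • (x ^ k * y) ∈ F (n + 1) := by
    intro k
    induction k with
    | zero => simp [hcs, hc0]
    | succ k ih =>
      have hid : corrSeq x y (k + 1 + 1) - (k + 1 + 1) • (x ^ (k + 1) * y)
          = (corrSeq x y (k + 1) - (k + 1) • (x ^ k * y)) * x
            + (k + 1) • (x ^ k * (y * x) - x ^ k * (x * y)) := by
        rw [hcs]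
        simp only [smul_sub, sub_mul, add_mul, smul_mul_assoc, ← mul_assoc, pow_succ,
          succ_nsmul]
        abel
      rw [hid]
      refine add_mem (fmulr F hF ih x) (nsmul_mem ?_ (k + 1))
      rw [← mul_sub]
      exact fmull F hF _ hyx
  have hsf : Summable (fun k : ℕ => ((k.factorial : K)⁻¹) • (x + y) ^ k) :=
    expS_summable F hF hxy
  have hsg : Summable (fun k : ℕ => ((k.factorial : K)⁻¹) • x ^ k) :=
    expS_summable F hF hx
  have hsgy : Summable (fun k : ℕ => (((k.factorial : K)⁻¹) • x ^ k) * y) :=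
    hsg.mul_right y
  have hR : ∀ k : ℕ, (((k + 1).factorial : K)⁻¹) • (x + y) ^ (k + 1)
      - (((k + 1).factorial : K)⁻¹) • x ^ (k + 1)
      - (((k.factorial : K)⁻¹) • x ^ k) * y ∈ F (n + 1) := by
    intro k
    have h1 : (((k + 1).factorial : K)⁻¹)
        • ((x + y) ^ (k + 1) - x ^ (k + 1) - corrSeq x y (k + 1)) ∈ F (n + 1) :=
      Submodule.smul_mem _ _ (claim1 (k + 1))
    have h2 : (((k + 1).factorial : K)⁻¹)
        • (corrSeq x y (k + 1) - (k + 1) • (x ^ k * y)) ∈ F (n + 1) :=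
      Submodule.smul_mem _ _ (claim2 k)
    have hid : (((k + 1).factorial : K)⁻¹) • (x + y) ^ (k + 1)
        - (((k + 1).factorial : K)⁻¹) • x ^ (k + 1)
        - (((k.factorial : K)⁻¹) • x ^ k) * y
        = (((k + 1).factorial : K)⁻¹)
            • ((x + y) ^ (k + 1) - x ^ (k + 1) - corrSeq x y (k + 1))
          + (((k + 1).factorial : K)⁻¹)
            • (corrSeq x y (k + 1) - (k + 1) • (x ^ k * y)) := by
      simp only [smul_sub, smul_mul_assoc]
      rw [fact_smul_cancel]
      abel
    rw [hid]
    exact add_mem h1 h2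
  have hfg : Summable (fun k : ℕ => ((k.factorial : K)⁻¹) • (x + y) ^ k
      - ((k.factorial : K)⁻¹) • x ^ k) := hsf.sub hsg
  have hsf1 : Summable (fun k : ℕ => (((k + 1).factorial : K)⁻¹) • (x + y) ^ (k + 1)
      - (((k + 1).factorial : K)⁻¹) • x ^ (k + 1)) := (summable_nat_add_iff 1).2 hfg
  have e0 : ∑' k : ℕ, ((((k + 1).factorial : K)⁻¹) • (x + y) ^ (k + 1)
      - (((k + 1).factorial : K)⁻¹) • x ^ (k + 1))
      = ∑' k : ℕ, (((k.factorial : K)⁻¹) • (x + y) ^ k - ((k.factorial : K)⁻¹) • x ^ k) := by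
    rw [Summable.tsum_eq_zero_add hfg]
    simp
  have e1 : expS K (x + y) - expS K x * (1 + y)
      = ∑' k : ℕ, ((((k + 1).factorial : K)⁻¹) • (x + y) ^ (k + 1)
          - (((k + 1).factorial : K)⁻¹) • x ^ (k + 1)
          - (((k.factorial : K)⁻¹) • x ^ k) * y) := by
    rw [Summable.tsum_sub hsf1 hsgy, e0, Summable.tsum_sub hsf hsg,
      show expS K (x + y) = ∑' k : ℕ, ((k.factorial : K)⁻¹) • (x + y) ^ k from rfl,
      show expS K x = ∑' k : ℕ, ((k.factorial : K)⁻¹) • x ^ k from rfl,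
      mul_add, mul_one, ← hsg.tsum_mul_right y]
    abel
  rw [e1]
  exact ftsum_mem F hF (hsf1.sub hsgy) hR

lemma expS_diff_mem (hF : IsCompleteFiltration K F) {x y : A} {n : ℕ} (hx : x ∈ F 1)
    (hn : 1 ≤ n) (hy : y ∈ F n) : expS K (x + y) - expS K x ∈ F n := by
  have h1 := key_cong F hF hx hn hy
  have hid : expS K (x + y) - expS K x
      = (expS K (x + y) - expS K x * (1 + y)) + y + (expS K x - 1) * y := by
    noncomm_ring
  rw [hid]
  exact add_mem (add_mem (fle F hF (by omega) h1) hy)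
    (fmul F hF (by omega) (expS_sub_one_mem F hF hx) hy)

lemma prod_step (hF : IsCompleteFiltration K F) {u v d e : A} {n : ℕ}
    (hu : u ∈ F 1) (hv : v ∈ F 1) (hn : 1 ≤ n) (hd : d ∈ F n) (he : e ∈ F n) :
    expS K (u + d) * expS K (v + e) - (expS K u * expS K v + d + e) ∈ F (n + 1) := by
  have hr1 := key_cong F hF hu hn hd
  have hr2 := key_cong F hF hv hn he
  have hA1 := expS_sub_one_mem F hF hu
  have hB1 := expS_sub_one_mem F hF hv
  have hid : expS K (u + d) * expS K (v + e) - (expS K u * expS K v + d + e)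
      = (expS K (u + d) - expS K u * (1 + d)) * expS K (v + e)
        + (expS K u * (1 + d)) * (expS K (v + e) - expS K v * (1 + e))
        + ((expS K u - 1) * d) * expS K v + d * (expS K v - 1)
        + ((expS K u - 1) * expS K v + (expS K v - 1)) * e
        + (expS K u * d) * (expS K v * e) := by
    noncomm_ring
  rw [hid]
  refine add_mem (add_mem (add_mem (add_mem (add_mem ?_ ?_) ?_) ?_) ?_) ?_
  · exact fmulr F hF hr1 _
  · exact fmull F hF _ hr2
  · exact fmulr F hF (fmul F hF (by omega) hA1 hd) _
  · exact fmul F hF (by omega) hd hB1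
  · exact fmul F hF (show n + 1 ≤ 1 + n by omega)
      (add_mem (fmulr F hF hA1 _) hB1) he
  · exact fmul F hF (by omega) (fmull F hF _ hd) (fmull F hF _ he)

lemma lim_aux (hF : IsCompleteFiltration K F) {w : ℕ → A}
    (hw : ∀ m, w (m + 1) - w m ∈ F (m + 1)) (hw0 : w 0 = 0) :
    ∃ z : A, ∀ m, z - w m ∈ F (m + 1) := by
  have hsg : Summable (fun m => w (m + 1) - w m) :=
    fsummable F hF fun k => fle F hF (by omega) (hw k)
  refine ⟨∑' m, (w (m + 1) - w m), fun M => ?_⟩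
  have htail : Summable (fun i => w (i + M + 1) - w (i + M)) :=
    (summable_nat_add_iff M).2 hsg
  have hsplit := Summable.sum_add_tsum_nat_add M hsg
  have hsum : ∑ i ∈ Finset.range M, (w (i + 1) - w i) = w M := by
    rw [Finset.sum_range_sub (fun i => w i), hw0, sub_zero]
  have hrw : (∑' m, (w (m + 1) - w m)) - w M = ∑' i, (w (i + M + 1) - w (i + M)) := by
    rw [← hsum, ← hsplit]
    abel
  rw [hrw]
  exact ftsum_mem F hF htail fun i => fle F hF (by omega) (hw (i + M))

lemma uniq_aux (hF : IsCompleteFiltration K F) (P : A →ₗ[K] A)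
    (hP : ∀ n, ∀ x ∈ F n, P x ∈ F n) {a b a' b' : A}
    (ha : a ∈ F 1) (hb : b ∈ F 1) (ha' : a' ∈ F 1) (hb' : b' ∈ F 1)
    (hPa : P a = a) (hPb : P b = 0) (hPa' : P a' = a') (hPb' : P b' = 0)
    (h : expS K a * expS K b = expS K a' * expS K b') : a = a' ∧ b = b' := by
  have main : ∀ n, a - a' ∈ F (n + 1) ∧ b - b' ∈ F (n + 1) := by
    intro n
    induction n with
    | zero => exact ⟨sub_mem ha ha', sub_mem hb hb'⟩
    | succ n ih =>
      obtain ⟨hd, he⟩ := ih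
      have h1 := prod_step F hF ha' hb' (by omega : 1 ≤ n + 1) hd he
      rw [show a' + (a - a') = a by abel, show b' + (b - b') = b by abel] at h1
      have h2 : a - a' + (b - b') ∈ F (n + 1 + 1) := by
        have hkey : a - a' + (b - b')
            = -(expS K a * expS K b - (expS K a' * expS K b' + (a - a') + (b - b'))) := by
          rw [h]; abel
        rw [hkey]
        exact neg_mem h1
      have hd' : a - a' ∈ F (n + 1 + 1) := by
        have h3 := hP _ _ h2
        rw [map_add, map_sub, map_sub, hPa, hPa', hPb, hPb'] at h3
        simpa using h3
      refine ⟨hd', ?_⟩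
      have h4 := sub_mem h2 hd'
      rw [show a - a' + (b - b') - (a - a') = b - b' by abel] at h4
      exact h4
  exact ⟨sub_eq_zero.mp (finter' F hF fun n => (main n).1),
    sub_eq_zero.mp (finter' F hF fun n => (main n).2)⟩

end Aux

theorem stmt8 (F : ℕ → Submodule K A) (hF : IsCompleteFiltration K F)
    (P : A →ₗ[K] A) (hP : ∀ n, ∀ x ∈ F n, P x ∈ F n)
    (hPP : ∀ x : A, P (P x) = P x) :
    ∀ η : A, η - 1 ∈ F 1 →
      ∃! p : A × A,
        p.1 ∈ expS K '' (⇑P '' (F 1 : Set A)) ∧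
        p.2 ∈ expS K '' ((fun x => x - P x) '' (F 1 : Set A)) ∧
        η = p.1 * p.2 := by
  intro η hη
  have hs0 : factorSeq P η 0 = ((0 : A), (0 : A)) := rfl
  have hss : ∀ m, factorSeq P η (m + 1)
      = ((factorSeq P η m).1 + P (η - expS K (factorSeq P η m).1 * expS K (factorSeq P η m).2),
         (factorSeq P η m).2 + ((η - expS K (factorSeq P η m).1 * expS K (factorSeq P η m).2)
           - P (η - expS K (factorSeq P η m).1 * expS K (factorSeq P η m).2))) := fun m => rfl
  have inv : ∀ m, (factorSeq P η m).1 ∈ F 1 ∧ (factorSeq P η m).2 ∈ F 1 ∧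
      P (factorSeq P η m).1 = (factorSeq P η m).1 ∧ P (factorSeq P η m).2 = 0 ∧
      η - expS K (factorSeq P η m).1 * expS K (factorSeq P η m).2 ∈ F (m + 1) := by
    intro m
    induction m with
    | zero =>
      rw [hs0]
      refine ⟨zero_mem _, zero_mem _, map_zero P, map_zero P, ?_⟩
      simpa [expS_zero] using hη
    | succ m ih =>
      obtain ⟨h1, h2, h3, h4, h5⟩ := ih
      rw [hss m]
      set u := (factorSeq P η m).1 with hudef
      set v := (factorSeq P η m).2 with hvdef
      set δ := η - expS K u * expS K v with hδdef
      have hPδ : P δ ∈ F (m + 1) := hP _ _ h5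
      have hPδ1 : P δ ∈ F 1 := fle F hF (by omega) hPδ
      have he : δ - P δ ∈ F (m + 1) := sub_mem h5 hPδ
      have he1 : δ - P δ ∈ F 1 := fle F hF (by omega) he
      refine ⟨add_mem h1 hPδ1, add_mem h2 he1, ?_, ?_, ?_⟩
      · show P (u + P δ) = u + P δ
        rw [map_add, h3, hPP]
      · show P (v + (δ - P δ)) = 0
        rw [map_add, h4, map_sub, hPP, sub_self, add_zero]
      · show η - expS K (u + P δ) * expS K (v + (δ - P δ)) ∈ F (m + 1 + 1)
        have hps := prod_step F hF h1 h2 (show 1 ≤ m + 1 by omega) hPδ he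
        have hco : expS K u * expS K v + P δ + (δ - P δ) = η := by
          rw [hδdef]; abel
        rw [hco] at hps
        have := neg_mem hps
        rw [neg_sub] at this
        exact this
  have hinc1 : ∀ m, (factorSeq P η (m + 1)).1 - (factorSeq P η m).1 ∈ F (m + 1) := by
    intro m
    rw [hss m]
    dsimp only
    rw [add_sub_cancel_left]
    exact hP _ _ (inv m).2.2.2.2
  have hinc2 : ∀ m, (factorSeq P η (m + 1)).2 - (factorSeq P η m).2 ∈ F (m + 1) := by
    intro m
    rw [hss m]
    dsimp only
    rw [add_sub_cancel_left]
    exact sub_mem (inv m).2.2.2.2 (hP _ _ (inv m).2.2.2.2)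
  obtain ⟨zu, hzu⟩ := lim_aux F hF (w := fun m => (factorSeq P η m).1) hinc1 rfl
  obtain ⟨zv, hzv⟩ := lim_aux F hF (w := fun m => (factorSeq P η m).2) hinc2 rfl
  have hzu1 : zu ∈ F 1 := by simpa [hs0] using hzu 0
  have hzv1 : zv ∈ F 1 := by simpa [hs0] using hzv 0
  have hPzu : P zu = zu := by
    refine sub_eq_zero.mp (finter' F hF fun m => ?_)
    have hdm := hzu m
    have hq : P zu - zu = P (zu - (factorSeq P η m).1) - (zu - (factorSeq P η m).1) := by
      rw [map_sub, (inv m).2.2.1]; abel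
    rw [hq]
    exact sub_mem (hP _ _ hdm) hdm
  have hPzv : P zv = 0 := by
    refine finter' F hF fun m => ?_
    have hdm := hzv m
    have hq : P zv = P (zv - (factorSeq P η m).2) := by
      rw [map_sub, (inv m).2.2.2.1, sub_zero]
    rw [hq]
    exact hP _ _ hdm
  have hEu : ∀ m, expS K zu - expS K (factorSeq P η m).1 ∈ F (m + 1) := by
    intro m
    have h := expS_diff_mem F hF (inv m).1 (show 1 ≤ m + 1 by omega) (hzu m)
    rwa [show (factorSeq P η m).1 + (zu - (factorSeq P η m).1) = zu by abel] at h
  have hEv : ∀ m, expS K zv - expS K (factorSeq P η m).2 ∈ F (m + 1) := by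
    intro m
    have h := expS_diff_mem F hF (inv m).2.1 (show 1 ≤ m + 1 by omega) (hzv m)
    rwa [show (factorSeq P η m).2 + (zv - (factorSeq P η m).2) = zv by abel] at h
  have hfac : η = expS K zu * expS K zv := by
    refine sub_eq_zero.mp (finter' F hF fun m => ?_)
    have hid : η - expS K zu * expS K zv
        = (η - expS K (factorSeq P η m).1 * expS K (factorSeq P η m).2)
          + (expS K (factorSeq P η m).1 - expS K zu) * expS K (factorSeq P η m).2
          + expS K zu * (expS K (factorSeq P η m).2 - expS K zv) := by
      noncomm_ring
    rw [hid]
    refine add_mem (add_mem (inv m).2.2.2.2 ?_) ?_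
    · refine fmulr F hF ?_ _
      simpa [neg_sub] using neg_mem (hEu m)
    · refine fmull F hF _ ?_
      simpa [neg_sub] using neg_mem (hEv m)
  refine ⟨(expS K zu, expS K zv), ⟨⟨P zu, ⟨zu, hzu1, rfl⟩, by rw [hPzu]⟩,
    ⟨zv - P zv, ⟨zv, hzv1, rfl⟩, by rw [hPzv, sub_zero]⟩, hfac⟩, ?_⟩
  rintro ⟨p1, p2⟩ ⟨⟨a, ⟨α, hα, rfl⟩, rfl⟩, ⟨b, ⟨β, hβ, rfl⟩, rfl⟩, hfac'⟩
  have ha : P α ∈ F 1 := hP 1 _ hα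
  have hb : β - P β ∈ F 1 := sub_mem hβ (hP 1 _ hβ)
  have hPa : P (P α) = P α := hPP α
  have hPb : P (β - P β) = 0 := by rw [map_sub, hPP, sub_self]
  have heq : expS K (P α) * expS K (β - P β) = expS K zu * expS K zv :=
    hfac'.symm.trans hfac
  obtain ⟨e1, e2⟩ := uniq_aux F hF P hP ha hb hzu1 hzv1 hPa hPb hPzu hPzv heq
  exact Prod.ext (congrArg (expS K) e1) (congrArg (expS K) e2)
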